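/- The invariant control set of the semigroup S = SL⁺(2,ℝ) (determinant-1 matrices with positive entries) acting on ℙ¹ is C = {[(x₁,x₂)] : x₁ ≥ 0, x₂ ≥ 0}; concretely: (i) S·C ⊆ C, (ii) for any two points [x],[y] in the interior of C there exists g ∈ S with g[x] = [y], and (iii) for any [x] ∈ C, C ⊆ cl(S[x]). -/

import Mathlib

open scoped LinearAlgebra.Projectivization

/-- Topology on the real projective line (quotient topology from the nonzero vectors). -/
noncomputable instance : TopologicalSpace (Projectivization ℝ (Fin 2 → ℝ)) :=
  instTopologicalSpaceQuotient

/-- The action of `SL(2,ℝ)` on the projective line `ℙ¹`. -/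
noncomputable def slAct (g : Matrix.SpecialLinearGroup (Fin 2) ℝ)
    (p : Projectivization ℝ (Fin 2 → ℝ)) : Projectivization ℝ (Fin 2 → ℝ) :=
  Projectivization.map (Matrix.mulVecLin g.1)
    (by
      have : Function.Injective g.1.mulVec :=
        Matrix.mulVec_injective_iff_isUnit.2 (Matrix.isUnit_iff_isUnit_det g.1 |>.2 (by
          simp [g.2]))
      exact this) p

lemma slAct_mk (g : Matrix.SpecialLinearGroup (Fin 2) ℝ) (v : Fin 2 → ℝ) (hv : v ≠ 0)
    (h : g.1.mulVec v ≠ 0) :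
    slAct g (Projectivization.mk ℝ v hv) = Projectivization.mk ℝ (g.1.mulVec v) h := by
  unfold slAct
  exact Projectivization.map_mk _ _ _ _

lemma sum_pos_of_ne (v : Fin 2 → ℝ) (hv : v ≠ 0) (hv0 : ∀ i, 0 ≤ v i) : 0 < v 0 + v 1 := by
  rcases Function.ne_iff.1 hv with ⟨i, hi⟩
  fin_cases i
  · have := lt_of_le_of_ne (hv0 0) (Ne.symm hi); linarith [hv0 1]
  · have := lt_of_le_of_ne (hv0 1) (Ne.symm hi); linarith [hv0 0]

lemma key (v w : Fin 2 → ℝ) (hv : v ≠ 0) (hw : w ≠ 0) (hv0 : ∀ i, 0 ≤ v i)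
    (hw0 : ∀ i, 0 < w i) :
    ∃ g : Matrix.SpecialLinearGroup (Fin 2) ℝ, (∀ i j, 0 < g.1 i j) ∧
      slAct g (Projectivization.mk ℝ v hv) = Projectivization.mk ℝ w hw := by
  have hsum : 0 < v 0 + v 1 := sum_pos_of_ne v hv hv0
  have hw00 := hw0 0
  have hw01 := hw0 1
  have hv00 := hv0 0
  have hv01 := hv0 1
  set P : ℝ := w 0 * w 1 * (v 0 + v 1) with hPdef
  have hP : 0 < P := by positivity
  set L : ℝ := 1 + v 0 / P with hLdef
  have hL1 : 1 ≤ L := by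
    have h0 : 0 ≤ v 0 / P := div_nonneg hv00 hP.le
    rw [hLdef]; linarith
  have hL : 0 < L := by linarith
  set E : ℝ := 1 / (P * L) with hEdef
  have hE : 0 < E := by positivity
  set a : ℝ := w 0 * (L + E * v 1) with hadef
  set b : ℝ := w 0 * (L - E * v 0) with hbdef
  set c : ℝ := w 1 * L with hcdef
  set d : ℝ := w 1 * L with hddef
  have hb' : 0 < L - E * v 0 := by
    have h1 : E * v 0 = v 0 / (P * L) := by rw [hEdef]; ring
    rw [h1, sub_pos, div_lt_iff₀ (by positivity)]
    have hLP : L * P = P + v 0 := by rw [hLdef]; field_simp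
    nlinarith [mul_nonneg (sub_nonneg.2 hL1) (mul_pos hL hP).le]
  have ha : 0 < a := by positivity
  have hb : 0 < b := by rw [hbdef]; positivity
  have hc : 0 < c := by positivity
  have hd : 0 < d := by positivity
  have hdet : a * d - b * c = 1 := by
    have : a * d - b * c = w 0 * w 1 * L * E * (v 0 + v 1) := by
      rw [hadef, hbdef, hcdef, hddef]; ring
    rw [this, hEdef, hPdef]
    field_simp
  refine ⟨⟨!![a, b; c, d], by
    rw [Matrix.det_fin_two_of]; simpa using hdet⟩, ?_, ?_⟩
  · intro i j; fin_cases i <;> fin_cases j <;> simpa using by assumption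
  · have hmv : (!![a, b; c, d]).mulVec v = (L * (v 0 + v 1)) • w := by
      funext i
      fin_cases i <;>
        simp [Matrix.mulVec, dotProduct, Fin.sum_univ_two, hadef, hbdef, hcdef, hddef, Matrix.vecHead, Matrix.vecTail] <;>
        ring
    have hne : (!![a, b; c, d]).mulVec v ≠ 0 := by
      rw [hmv]
      simp only [ne_eq, smul_eq_zero, not_or]
      exact ⟨by positivity, hw⟩
    rw [slAct_mk ⟨!![a, b; c, d], by rw [Matrix.det_fin_two_of]; simpa using hdet⟩ v hv hne]
    rw [Projectivization.mk_eq_mk_iff' ℝ _ _ hne hw]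
    exact ⟨L * (v 0 + v 1), hmv.symm⟩

/-- `C = {[(x₁,x₂)] : x₁ ≥ 0, x₂ ≥ 0} ⊆ ℙ¹`. -/
def Cset : Set (Projectivization ℝ (Fin 2 → ℝ)) :=
  {p | ∃ v : Fin 2 → ℝ, ∃ hv : v ≠ 0, (∀ i, 0 ≤ v i) ∧ p = Projectivization.mk ℝ v hv}

/-- `C` is the invariant control set of `SL⁺(2,ℝ)` on `ℙ¹`: it is invariant, the semigroup
acts transitively on its interior points, and `C ⊆ cl(S[x])` for every `[x] ∈ C`. -/
theorem stmt15 :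
    (∀ g : Matrix.SpecialLinearGroup (Fin 2) ℝ, (∀ i j, 0 < g.1 i j) →
      ∀ p ∈ Cset, slAct g p ∈ Cset) ∧
    (∀ v w : Fin 2 → ℝ, ∀ hv : v ≠ 0, ∀ hw : w ≠ 0, (∀ i, 0 < v i) → (∀ i, 0 < w i) →
      ∃ g : Matrix.SpecialLinearGroup (Fin 2) ℝ, (∀ i j, 0 < g.1 i j) ∧
        slAct g (Projectivization.mk ℝ v hv) = Projectivization.mk ℝ w hw) ∧
    (∀ p ∈ Cset, Cset ⊆ closure
      {q | ∃ g : Matrix.SpecialLinearGroup (Fin 2) ℝ, (∀ i j, 0 < g.1 i j) ∧ q = slAct g p}) := by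
  refine ⟨?_, ?_, ?_⟩
  · -- invariance
    rintro g hg p ⟨v, hv, hv0, rfl⟩
    have hsum : 0 < v 0 + v 1 := sum_pos_of_ne v hv hv0
    have hpos : ∀ i, 0 < g.1.mulVec v i := by
      intro i
      have : g.1.mulVec v i = g.1 i 0 * v 0 + g.1 i 1 * v 1 := by
        simp [Matrix.mulVec, dotProduct, Fin.sum_univ_two]
      rw [this]
      have hcase : 0 < v 0 ∨ 0 < v 1 := by
        rcases lt_or_ge 0 (v 0) with h | h
        · exact Or.inl h
        · right; linarith
      rcases hcase with h | h
      · nlinarith [mul_pos (hg i 0) h, mul_nonneg (hg i 1).le (hv0 1)]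
      · nlinarith [mul_pos (hg i 1) h, mul_nonneg (hg i 0).le (hv0 0)]
    have hne : g.1.mulVec v ≠ 0 := fun h => by
      have := hpos 0; rw [h] at this; simp at this
    exact ⟨g.1.mulVec v, hne, fun i => (hpos i).le, slAct_mk g v hv hne⟩
  · -- transitivity on the interior
    intro v w hv hw hvp hwp
    exact key v w hv hw (fun i => (hvp i).le) hwp
  · -- C ⊆ cl(S[x])
    rintro p ⟨v, hv, hv0, rfl⟩ q ⟨u, hu, hu0, rfl⟩
    have hne : ∀ t : ℝ, u + |t| • (1 : Fin 2 → ℝ) ≠ 0 := by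
      intro t h
      have hsum : 0 < u 0 + u 1 := sum_pos_of_ne u hu hu0
      have h0 := congrFun h 0
      have h1 := congrFun h 1
      simp [Pi.add_apply] at h0 h1
      have := abs_nonneg t
      linarith
    set F : ℝ → Projectivization ℝ (Fin 2 → ℝ) :=
      fun t => Projectivization.mk ℝ (u + |t| • (1 : Fin 2 → ℝ)) (hne t) with hF
    have hcont : Continuous F := by
      have hG : Continuous (fun t : ℝ => (⟨u + |t| • (1 : Fin 2 → ℝ), hne t⟩ :
          {x : Fin 2 → ℝ // x ≠ 0})) := by
        refine Continuous.subtype_mk ?_ _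
        exact continuous_const.add (continuous_abs.smul continuous_const)
      exact continuous_quotient_mk'.comp hG
    have hF0 : F 0 = Projectivization.mk ℝ u hu := by
      rw [hF]
      rw [Projectivization.mk_eq_mk_iff' ℝ _ _ (hne 0) hu]
      exact ⟨1, by simp⟩
    have htend : Filter.Tendsto F (nhdsWithin (0 : ℝ) {0}ᶜ)
        (nhds (Projectivization.mk ℝ u hu)) := by
      rw [← hF0]
      exact (hcont.tendsto 0).mono_left nhdsWithin_le_nhds
    refine mem_closure_of_tendsto htend ?_
    refine Filter.eventually_of_mem self_mem_nhdsWithin ?_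
    intro t ht
    have htpos : 0 < |t| := abs_pos.2 ht
    have hwp : ∀ i, 0 < (u + |t| • (1 : Fin 2 → ℝ)) i := by
      intro i
      have := hu0 i
      simp [Pi.add_apply]
      positivity
    obtain ⟨g, hgpos, hgeq⟩ := key v _ hv (hne t) hv0 hwp
    exact ⟨g, hgpos, hgeq.symm⟩
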